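/- Let M3 be a matching of maximum weight among all matchings of size n/3 in G. Then w(M3) ≥ Σ_{xyz ∈ P*} max{w(xy), w(yz)} ≥ (1/2)·OPT. Moreover, if n is even and M2 is a matching of maximum weight among all matchings of size n/2 in G, then w(M2) ≥ w(M3). -/

import Mathlib

open Finset
open scoped Classical

namespace MW3PP

/-- A 3-path `xyz`: a path on three distinct vertices with middle vertex `y`. -/
structure P3 (V : Type*) where
  x : V
  y : V
  z : V
  hxy : x ≠ y
  hyz : y ≠ z
  hxz : x ≠ z

variable {V : Type*} [Fintype V] [DecidableEq V]

/-- The vertex set of a 3-path. -/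
def P3.verts (p : P3 V) : Finset V := {p.x, p.y, p.z}

/-- The two edges of a 3-path. -/
def P3.edges (p : P3 V) : Finset (Sym2 V) := {s(p.x, p.y), s(p.y, p.z)}

/-- The weight of a 3-path. -/
def P3.wt (w : Sym2 V → ℝ) (p : P3 V) : ℝ := w s(p.x, p.y) + w s(p.y, p.z)

/-- The total weight of a set of edges. -/
def ew (w : Sym2 V → ℝ) (F : Finset (Sym2 V)) : ℝ := ∑ e ∈ F, w e

/-- The total weight of a set of 3-paths. -/
def pw (w : Sym2 V → ℝ) (P : Finset (P3 V)) : ℝ := ∑ p ∈ P, p.wt w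

/-- `∑_{xyz ∈ S} max (w (xy)) (w (yz))`. -/
def maxSum (w : Sym2 V → ℝ) (S : Finset (P3 V)) : ℝ :=
  ∑ p ∈ S, max (w s(p.x, p.y)) (w s(p.y, p.z))

/-- A perfect 3-path packing: `n/3` pairwise vertex-disjoint 3-paths covering all vertices. -/
def IsPacking (P : Finset (P3 V)) : Prop :=
  P.card = Fintype.card V / 3 ∧
  (∀ p ∈ P, ∀ q ∈ P, p ≠ q → Disjoint p.verts q.verts) ∧
  (∀ v : V, ∃ p ∈ P, v ∈ p.verts)

/-- A maximum-weight perfect 3-path packing. -/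
def IsMaxPacking (w : Sym2 V → ℝ) (P : Finset (P3 V)) : Prop :=
  IsPacking P ∧ ∀ Q : Finset (P3 V), IsPacking Q → pw w Q ≤ pw w P

/-- A matching: a set of pairwise vertex-disjoint (non-loop) edges. -/
def IsMatching (M : Finset (Sym2 V)) : Prop :=
  (∀ e ∈ M, ¬ e.IsDiag) ∧
  ∀ e ∈ M, ∀ f ∈ M, e ≠ f → ∀ v : V, v ∈ e → v ∉ f

/-- A maximum-weight matching among all matchings of size `k`. -/
def IsMaxMatchingOfSize (w : Sym2 V → ℝ) (k : ℕ) (M : Finset (Sym2 V)) : Prop :=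
  IsMatching M ∧ M.card = k ∧
  ∀ M' : Finset (Sym2 V), IsMatching M' → M'.card = k → ew w M' ≤ ew w M

/-- `v ∈ V(M)` : vertex `v` is covered by the matching `M`. -/
def covered (M : Finset (Sym2 V)) (v : V) : Prop := ∃ e ∈ M, v ∈ e

/-- `e_u` : the edge of `M` containing `u` (junk value if there is none). -/
noncomputable def eMatch (M : Finset (Sym2 V)) (u : V) : Sym2 V :=
  if h : ∃ e ∈ M, u ∈ e then h.choose else s(u, u)

/-- The cost `c` of an edge with respect to a matching `M`:
`c(uv) = w(uv) - min (w (e_u)) (w (e_v))` if both endpoints are covered by `M`,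
and `c(uv) = w(uv)` otherwise. -/
noncomputable def cost (w : Sym2 V → ℝ) (M : Finset (Sym2 V)) : Sym2 V → ℝ :=
  Sym2.lift ⟨fun u v =>
    if covered M u ∧ covered M v then
      w s(u, v) - min (w (eMatch M u)) (w (eMatch M v))
    else w s(u, v), by
      intro u v
      dsimp only
      by_cases h : covered M u ∧ covered M v
      · rw [if_pos h, if_pos (show covered M v ∧ covered M u from ⟨h.2, h.1⟩),
          Sym2.eq_swap, min_comm]
      · rw [if_neg h, if_neg (show ¬(covered M v ∧ covered M u) from fun h' => h ⟨h'.2, h'.1⟩),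
          Sym2.eq_swap]⟩

/-- The total cost of a set of edges. -/
noncomputable def cw (w : Sym2 V → ℝ) (M F : Finset (Sym2 V)) : ℝ := ∑ e ∈ F, cost w M e

/-- The number of vertices of the 3-path `p` covered by `M`. -/
noncomputable def kcnt (M : Finset (Sym2 V)) (p : P3 V) : ℕ :=
  (p.verts.filter fun v => covered M v).card

/-- Exactly one of the two edges of `p` lies in `M`. -/
def exOne (M : Finset (Sym2 V)) (p : P3 V) : Prop :=
  (s(p.x, p.y) ∈ M ∧ s(p.y, p.z) ∉ M) ∨ (s(p.x, p.y) ∉ M ∧ s(p.y, p.z) ∈ M)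

def cls1 (M : Finset (Sym2 V)) (p : P3 V) : Prop := kcnt M p = 0
def cls2 (M : Finset (Sym2 V)) (p : P3 V) : Prop := kcnt M p = 1 ∧ ¬ covered M p.y
def cls3 (M : Finset (Sym2 V)) (p : P3 V) : Prop := kcnt M p = 1 ∧ covered M p.y
def cls4 (M : Finset (Sym2 V)) (p : P3 V) : Prop := kcnt M p = 2 ∧ ¬ covered M p.y
def cls5 (M : Finset (Sym2 V)) (p : P3 V) : Prop := kcnt M p = 2 ∧ covered M p.y ∧ exOne M p
def cls6 (M : Finset (Sym2 V)) (p : P3 V) : Prop :=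
  kcnt M p = 2 ∧ covered M p.y ∧ s(p.x, p.y) ∉ M ∧ s(p.y, p.z) ∉ M
def cls7 (M : Finset (Sym2 V)) (p : P3 V) : Prop := kcnt M p = 3 ∧ exOne M p
def cls8 (M : Finset (Sym2 V)) (p : P3 V) : Prop :=
  kcnt M p = 3 ∧ s(p.x, p.y) ∉ M ∧ s(p.y, p.z) ∉ M

/-- The subset of a set of 3-paths satisfying a predicate. -/
noncomputable def psel (P : Finset (P3 V)) (c : P3 V → Prop) : Finset (P3 V) := P.filter c

/-- The set of all edges of the 3-paths in `S`. -/
def Esub (S : Finset (P3 V)) : Finset (Sym2 V) := S.biUnion P3.edges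

/-- The heaviest edge of a 3-path (the edge `xy` in case of a tie). -/
noncomputable def heavy (w : Sym2 V → ℝ) (p : P3 V) : Sym2 V :=
  if w s(p.y, p.z) ≤ w s(p.x, p.y) then s(p.x, p.y) else s(p.y, p.z)

noncomputable def X1 (w : Sym2 V → ℝ) (P : Finset (P3 V)) (M : Finset (Sym2 V)) :
    Finset (Sym2 V) := (psel P (cls1 M)).image (heavy w)
noncomputable def X2 (P : Finset (P3 V)) (M : Finset (Sym2 V)) : Finset (Sym2 V) :=
  (psel P (cls2 M)).image fun p => if covered M p.x then s(p.x, p.y) else s(p.y, p.z)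
noncomputable def X3 (w : Sym2 V → ℝ) (P : Finset (P3 V)) (M : Finset (Sym2 V)) :
    Finset (Sym2 V) := (psel P (cls3 M)).image (heavy w)
noncomputable def X4 (w : Sym2 V → ℝ) (P : Finset (P3 V)) (M : Finset (Sym2 V)) :
    Finset (Sym2 V) := (psel P (cls4 M)).image (heavy w)
noncomputable def X5 (P : Finset (P3 V)) (M : Finset (Sym2 V)) : Finset (Sym2 V) :=
  (psel P (cls5 M)).image fun p => if s(p.x, p.y) ∈ M then s(p.y, p.z) else s(p.x, p.y)
noncomputable def X6 (P : Finset (P3 V)) (M : Finset (Sym2 V)) : Finset (Sym2 V) :=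
  (psel P (cls6 M)).image fun p => if covered M p.x then s(p.y, p.z) else s(p.x, p.y)
noncomputable def X7 (P : Finset (P3 V)) (M : Finset (Sym2 V)) : Finset (Sym2 V) :=
  (psel P (cls7 M)).image fun p => if s(p.x, p.y) ∈ M then s(p.y, p.z) else s(p.x, p.y)
noncomputable def X8 (w : Sym2 V → ℝ) (P : Finset (P3 V)) (M : Finset (Sym2 V)) :
    Finset (Sym2 V) := (psel P (cls8 M)).image (heavy w)

noncomputable def Y1 (w : Sym2 V → ℝ) (P : Finset (P3 V)) (M : Finset (Sym2 V)) :
    Finset (Sym2 V) := Esub (psel P (cls1 M)) \ X1 w P M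
noncomputable def Y2 (P : Finset (P3 V)) (M : Finset (Sym2 V)) : Finset (Sym2 V) :=
  Esub (psel P (cls2 M)) \ X2 P M
noncomputable def Y3 (w : Sym2 V → ℝ) (P : Finset (P3 V)) (M : Finset (Sym2 V)) :
    Finset (Sym2 V) := Esub (psel P (cls3 M)) \ X3 w P M
noncomputable def Y4 (w : Sym2 V → ℝ) (P : Finset (P3 V)) (M : Finset (Sym2 V)) :
    Finset (Sym2 V) := Esub (psel P (cls4 M)) \ X4 w P M
noncomputable def Y5 (P : Finset (P3 V)) (M : Finset (Sym2 V)) : Finset (Sym2 V) :=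
  Esub (psel P (cls5 M)) \ X5 P M
noncomputable def Y6 (P : Finset (P3 V)) (M : Finset (Sym2 V)) : Finset (Sym2 V) :=
  Esub (psel P (cls6 M)) \ X6 P M
noncomputable def Y7 (P : Finset (P3 V)) (M : Finset (Sym2 V)) : Finset (Sym2 V) :=
  Esub (psel P (cls7 M)) \ X7 P M
noncomputable def Y8 (w : Sym2 V → ℝ) (P : Finset (P3 V)) (M : Finset (Sym2 V)) :
    Finset (Sym2 V) := Esub (psel P (cls8 M)) \ X8 w P M

/-- An edge is a middle edge (w.r.t. `M`) if exactly one of its endpoints lies in `V(M)`. -/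
def isMiddle (M : Finset (Sym2 V)) (e : Sym2 V) : Prop :=
  ∃ u v : V, e = s(u, v) ∧ covered M u ∧ ¬ covered M v

/-- Two edges share a vertex. -/
def shares (e f : Sym2 V) : Prop := ∃ v, v ∈ e ∧ v ∈ f

/-- `g` is a middle edge of some 3-path in `S`. -/
def middleIn (M : Finset (Sym2 V)) (S : Finset (P3 V)) (g : Sym2 V) : Prop :=
  (∃ p ∈ S, g ∈ p.edges) ∧ isMiddle M g

/-- The 3-paths of `P` lying in classes 2, 3 or 4. -/
noncomputable def P234 (P : Finset (P3 V)) (M : Finset (Sym2 V)) : Finset (P3 V) :=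
  psel P fun p => cls2 M p ∨ cls3 M p ∨ cls4 M p

/-- `M_1`: edges of `M` sharing a vertex with at least one middle edge of a 3-path of `P*_6`. -/
noncomputable def Mset1 (P : Finset (P3 V)) (M : Finset (Sym2 V)) : Finset (Sym2 V) :=
  M.filter fun f => ∃ g, middleIn M (psel P (cls6 M)) g ∧ shares f g

/-- `M_2`: edges of `M` sharing a vertex with at least one middle edge, all middle edges met
belonging to 3-paths of `P*_2 ∪ P*_3 ∪ P*_4`. -/
noncomputable def Mset2 (P : Finset (P3 V)) (M : Finset (Sym2 V)) : Finset (Sym2 V) :=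
  M.filter fun f =>
    (∃ g, middleIn M P g ∧ shares f g) ∧
    ∀ g, middleIn M P g → shares f g → middleIn M (P234 P M) g

/-- `M_3 = M ∩ E(P*_7)`. -/
noncomputable def Mset3 (P : Finset (P3 V)) (M : Finset (Sym2 V)) : Finset (Sym2 V) :=
  M ∩ Esub (psel P (cls7 M))

/-- `M_4 = M ∩ E(P*_5)`. -/
noncomputable def Mset4 (P : Finset (P3 V)) (M : Finset (Sym2 V)) : Finset (Sym2 V) :=
  M ∩ Esub (psel P (cls5 M))

/-- The middle edges of 3-paths of `P*_6`. -/
noncomputable def mid6 (P : Finset (P3 V)) (M : Finset (Sym2 V)) : Finset (Sym2 V) :=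
  (Esub (psel P (cls6 M))).filter (isMiddle M)

/-- `M'_1`: edges of `M_1` meeting exactly one middle edge of a 3-path of `P*_6` and
no middle edge of a 3-path of `P*_2 ∪ P*_3 ∪ P*_4`. -/
noncomputable def Mset1' (P : Finset (P3 V)) (M : Finset (Sym2 V)) : Finset (Sym2 V) :=
  (Mset1 P M).filter fun f =>
    ((mid6 P M).filter fun g => shares f g).card = 1 ∧
    ∀ g, middleIn M (P234 P M) g → ¬ shares f g

/-- `M''_1`: edges of `M_1` meeting two middle edges of 3-paths of `P*_6`. -/
noncomputable def Mset1'' (P : Finset (P3 V)) (M : Finset (Sym2 V)) : Finset (Sym2 V) :=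
  (Mset1 P M).filter fun f => ((mid6 P M).filter fun g => shares f g).card = 2

/-- `M'''_1`: edges of `M_1` meeting exactly one middle edge of a 3-path of `P*_6` and
at least one middle edge of a 3-path of `P*_2 ∪ P*_3 ∪ P*_4`. -/
noncomputable def Mset1''' (P : Finset (P3 V)) (M : Finset (Sym2 V)) : Finset (Sym2 V) :=
  (Mset1 P M).filter fun f =>
    ((mid6 P M).filter fun g => shares f g).card = 1 ∧
    ∃ g, middleIn M (P234 P M) g ∧ shares f g

/-- Assumption on `P*`: for every 3-path `xyz ∈ P*` with `y ∉ V(M)` and `x, z ∈ V(M)`,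
the vertices `x` and `z` lie in two distinct edges of `M`. -/
def Ass (P : Finset (P3 V)) (M : Finset (Sym2 V)) : Prop :=
  ∀ p ∈ P, ¬ covered M p.y → covered M p.x → covered M p.z →
    ∃ e ∈ M, ∃ f ∈ M, p.x ∈ e ∧ p.z ∈ f ∧ e ≠ f

/-- An admissible edge w.r.t. `M`: either both endpoints are in `V(M)` and lie in two distinct
edges of `M`, or exactly one endpoint is in `V(M)`. -/
def goodEdge (M : Finset (Sym2 V)) (e : Sym2 V) : Prop :=
  (∃ u v : V, e = s(u, v) ∧ covered M u ∧ covered M v ∧ ∀ f ∈ M, ¬(u ∈ f ∧ v ∈ f)) ∨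
  (∃ u v : V, e = s(u, v) ∧ covered M u ∧ ¬ covered M v)


lemma y_mem_heavy (w : Sym2 V → ℝ) (p : P3 V) : p.y ∈ heavy w p := by
  unfold heavy; split_ifs <;> simp

lemma mem_verts_of_mem_heavy (w : Sym2 V → ℝ) (p : P3 V) {v : V}
    (hv : v ∈ heavy w p) : v ∈ p.verts := by
  unfold heavy at hv
  unfold P3.verts
  split_ifs at hv <;> rw [Sym2.mem_iff] at hv <;>
    rcases hv with rfl | rfl <;> simp

lemma w_heavy (w : Sym2 V → ℝ) (p : P3 V) :
    w (heavy w p) = max (w s(p.x, p.y)) (w s(p.y, p.z)) := by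
  unfold heavy; split_ifs with h
  · exact (max_eq_left h).symm
  · exact (max_eq_right (le_of_not_ge h)).symm

lemma pairup (S : Finset V) (h : Even S.card) :
    ∃ N : Finset (Sym2 V), IsMatching N ∧ 2 * N.card = S.card ∧
      ∀ e ∈ N, ∀ v ∈ e, v ∈ S := by
  induction S using Finset.strongInduction with
  | _ S ih =>
    rcases S.eq_empty_or_nonempty with rfl | ⟨u, hu⟩
    · exact ⟨∅, ⟨by simp, by simp⟩, by simp, by simp⟩
    · have h2 : 2 ≤ S.card := by
        rcases h with ⟨k, hk⟩
        have : 0 < S.card := Finset.card_pos.mpr ⟨u, hu⟩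
        omega
      obtain ⟨v, hv, hvu⟩ := Finset.exists_mem_ne (s := S) (by omega) u
      set S' := S \ {u, v} with hS'def
      have hsub : ({u, v} : Finset V) ⊆ S := by
        intro a ha; rcases Finset.mem_insert.mp ha with rfl | ha
        · exact hu
        · rw [Finset.mem_singleton] at ha; subst ha; exact hv
      have hcard2 : ({u, v} : Finset V).card = 2 := by
        rw [Finset.card_insert_of_notMem (by simp [hvu.symm]), Finset.card_singleton]
      have hcardS' : S'.card = S.card - 2 := by
        rw [hS'def, Finset.card_sdiff_of_subset hsub, hcard2]
      have hssub : S' ⊂ S := by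
        refine Finset.ssubset_iff_of_subset (Finset.sdiff_subset) |>.mpr ?_
        exact ⟨u, hu, by simp⟩
      obtain ⟨N, hN, hNc, hNv⟩ := ih S' hssub (by
        rcases h with ⟨k, hk⟩; exact ⟨k - 1, by omega⟩)
      have hnotmemS' : ∀ a : V, a ∈ S' → a ≠ u ∧ a ≠ v := by
        intro a ha
        rw [hS'def, Finset.mem_sdiff] at ha
        constructor <;> rintro rfl <;> simp at ha
      have huv_not : s(u, v) ∉ N := by
        intro hmem
        have := hNv _ hmem u (by simp)
        exact (hnotmemS' u this).1 rfl
      refine ⟨insert s(u, v) N, ⟨?_, ?_⟩, ?_, ?_⟩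
      · intro e he
        rcases Finset.mem_insert.mp he with rfl | he
        · rw [Sym2.isDiag_iff_proj_eq]; exact fun h' => hvu h'.symm
        · exact hN.1 e he
      · intro e he f hf hef a hae haf
        rcases Finset.mem_insert.mp he with rfl | he <;>
          rcases Finset.mem_insert.mp hf with rfl | hf
        · exact hef rfl
        · have haS : a ∈ S' := hNv f hf a haf
          rcases Sym2.mem_iff.mp hae with rfl | rfl
          · exact (hnotmemS' a haS).1 rfl
          · exact (hnotmemS' a haS).2 rfl
        · have haS : a ∈ S' := hNv e he a hae
          rcases Sym2.mem_iff.mp haf with rfl | rfl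
          · exact (hnotmemS' a haS).1 rfl
          · exact (hnotmemS' a haS).2 rfl
        · exact hN.2 e he f hf hef a hae haf
      · rw [Finset.card_insert_of_notMem huv_not]; omega
      · intro e he a hae
        rcases Finset.mem_insert.mp he with rfl | he
        · rcases Sym2.mem_iff.mp hae with rfl | rfl
          · exact hu
          · exact hv
        · exact Finset.mem_sdiff.mp (hNv e he a hae) |>.1

theorem statement_0 (n : ℕ) (hn : Fintype.card V = n) (h3 : 3 ∣ n)
    (w : Sym2 V → ℝ) (hw : ∀ e : Sym2 V, 0 ≤ w e)
    (Pstar : Finset (P3 V)) (hP : IsMaxPacking w Pstar)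
    (M3 : Finset (Sym2 V)) (hM3 : IsMaxMatchingOfSize w (n / 3) M3) :
    maxSum w Pstar ≤ ew w M3 ∧
    (1 / 2 : ℝ) * pw w Pstar ≤ maxSum w Pstar ∧
    (∀ (_ : 2 ∣ n) (M2' : Finset (Sym2 V)), IsMaxMatchingOfSize w (n / 2) M2' →
      ew w M3 ≤ ew w M2') := by
  obtain ⟨⟨hPcard, hPdisj, hPcov⟩, _⟩ := hP
  obtain ⟨hM3m, hM3card, hM3max⟩ := hM3
  -- Part 1
  have hinj : Set.InjOn (heavy w) ↑Pstar := by
    intro p hp q hq hpq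
    by_contra hne
    have hd := hPdisj p hp q hq hne
    have h1 : p.y ∈ p.verts := by simp [P3.verts]
    have h2 : p.y ∈ q.verts := mem_verts_of_mem_heavy w q (hpq ▸ y_mem_heavy w p)
    exact Finset.disjoint_left.mp hd h1 h2
  have hHcard : (Pstar.image (heavy w)).card = n / 3 := by
    rw [Finset.card_image_of_injOn hinj, hPcard, hn]
  have hHm : IsMatching (Pstar.image (heavy w)) := by
    constructor
    · intro e he
      obtain ⟨p, hp, rfl⟩ := Finset.mem_image.mp he
      unfold heavy; split_ifs <;> rw [Sym2.isDiag_iff_proj_eq]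
      · exact fun h' => p.hxy h'
      · exact fun h' => p.hyz h'
    · intro e he f hf hef a hae haf
      obtain ⟨p, hp, rfl⟩ := Finset.mem_image.mp he
      obtain ⟨q, hq, rfl⟩ := Finset.mem_image.mp hf
      have hne : p ≠ q := fun h => hef (by rw [h])
      exact Finset.disjoint_left.mp (hPdisj p hp q hq hne)
        (mem_verts_of_mem_heavy w p hae) (mem_verts_of_mem_heavy w q haf)
  have hHw : ew w (Pstar.image (heavy w)) = maxSum w Pstar := by
    unfold ew maxSum
    rw [Finset.sum_image (fun p hp q hq => hinj hp hq)]
    exact Finset.sum_congr rfl fun p _ => w_heavy w p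
  have part1 : maxSum w Pstar ≤ ew w M3 := by
    rw [← hHw]; exact hM3max _ hHm hHcard
  refine ⟨part1, ?_, ?_⟩
  -- Part 2
  · unfold pw maxSum
    rw [Finset.mul_sum]
    refine Finset.sum_le_sum fun p _ => ?_
    rcases le_total (w s(p.x, p.y)) (w s(p.y, p.z)) with h | h
    · rw [max_eq_right h]; unfold P3.wt; linarith
    · rw [max_eq_left h]; unfold P3.wt; linarith
  -- Part 3
  · intro h2 M2' hM2'
    obtain ⟨hM2m, hM2card, hM2max⟩ := hM2'
    -- the covered set
    set C : Finset V := Finset.univ.filter (fun x => covered M3 x) with hCdef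
    have hCeq : C = M3.biUnion (fun e => Finset.univ.filter (· ∈ e)) := by
      ext a
      rw [hCdef, Finset.mem_filter]
      simp only [hCdef, Finset.mem_filter, Finset.mem_univ, true_and,
        Finset.mem_biUnion, covered]
    have hCcard : C.card = 2 * M3.card := by
      rw [hCeq, Finset.card_biUnion]
      · rw [Finset.sum_congr rfl (fun e he => ?_), Finset.sum_const, smul_eq_mul,
          mul_comm]
        · obtain ⟨⟨a, b⟩, rfl⟩ := e.exists_rep
          have hab : a ≠ b := fun h => hM3m.1 _ he (by
            rw [Sym2.isDiag_iff_proj_eq]; exact h)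
          have : Finset.univ.filter (· ∈ s(a, b)) = {a, b} := by
            ext c; simp [Sym2.mem_iff]
          rw [this, Finset.card_insert_of_notMem (by simp [hab]),
            Finset.card_singleton]
      · intro e he f hf hef
        rw [Function.onFun, Finset.disjoint_left]
        intro a hae haf
        simp only [Finset.mem_filter, Finset.mem_univ, true_and] at hae haf
        exact hM3m.2 e he f hf hef a hae haf
    set S : Finset V := Finset.univ \ C with hSdef
    have hScard : S.card = n - 2 * (n / 3) := by
      rw [hSdef, Finset.card_sdiff_of_subset (Finset.subset_univ _), Finset.card_univ, hn,
        hCcard, hM3card]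
    obtain ⟨N, hNm, hNc, hNv⟩ := pairup S (by
      rw [hScard]
      obtain ⟨a, rfl⟩ := h3
      obtain ⟨b, hb⟩ := h2
      exact ⟨a - (3 * a) / 6, by omega⟩)
    have hNS : ∀ e ∈ N, ∀ a ∈ e, ¬ covered M3 a := by
      intro e he a hae hcov
      have := hNv e he a hae
      rw [hSdef, Finset.mem_sdiff, hCdef] at this
      exact this.2 (by simp [hcov])
    have hdisjMN : Disjoint M3 N := by
      rw [Finset.disjoint_left]
      intro e heM heN
      obtain ⟨⟨a, b⟩, rfl⟩ := e.exists_rep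
      exact hNS _ heN a (by exact Sym2.mem_mk_left a b) ⟨_, heM, Sym2.mem_mk_left a b⟩
    have hunion : IsMatching (M3 ∪ N) := by
      constructor
      · intro e he
        rcases Finset.mem_union.mp he with he | he
        · exact hM3m.1 e he
        · exact hNm.1 e he
      · intro e he f hf hef a hae haf
        rcases Finset.mem_union.mp he with he | he <;>
          rcases Finset.mem_union.mp hf with hf | hf
        · exact hM3m.2 e he f hf hef a hae haf
        · exact hNS f hf a haf ⟨e, he, hae⟩
        · exact hNS e he a hae ⟨f, hf, haf⟩
        · exact hNm.2 e he f hf hef a hae haf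
    have hucard : (M3 ∪ N).card = n / 2 := by
      rw [Finset.card_union_of_disjoint hdisjMN, hM3card]
      omega
    have hle : ew w M3 ≤ ew w (M3 ∪ N) := by
      unfold ew
      rw [Finset.sum_union hdisjMN]
      have : 0 ≤ ∑ e ∈ N, w e := Finset.sum_nonneg fun e _ => hw e
      linarith
    exact hle.trans (hM2max _ hunion hucard)

end MW3PP
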